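/- For every integer n ≥ 2, consider the action of the reversal map β on the set of Fibonacci strings of length n (for n ≥ 2, the automorphism group of the Fibonacci cube Γ_n consists exactly of the identity and β, so these orbits are the vertex orbits of Γ_n). Then: the number of orbits of size 1 equals F_{⌊(n−(−1)^n)/2⌋+2}; the number of orbits of size 2 equals (F_{n+2} − F_{⌊(n−(−1)^n)/2⌋+2})/2; and the total number of orbits equals (F_{n+2} + F_{⌊(n−(−1)^n)/2⌋+2})/2. -/

import Mathlib

open scoped Classical

/-- Cyclic shift `α`: maps `u₁u₂⋯uₙ` to `uₙu₁⋯uₙ₋₁`. -/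
def cyc {α : Type*} (u : List α) : List α := u.rotate (u.length - 1)

/-- `listPow v k` is the concatenation of `k` copies of `v`. -/
def listPow {α : Type*} (v : List α) (k : ℕ) : List α := (List.replicate k v).flatten

/-- The period of `u`: the least `k > 0` with `cyc^[k] u = u`. -/
noncomputable def period {α : Type*} (u : List α) : ℕ := sInf {k | 0 < k ∧ cyc^[k] u = u}

/-- `u` is primitive if it is not the concatenation of `k ≥ 2` copies of a shorter string. -/
def IsPrimitive {α : Type*} (u : List α) : Prop :=
  ∀ (v : List α) (k : ℕ), 2 ≤ k → v.length < u.length → u ≠ listPow v k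

/-- The dihedral orbit of `u`: `{α^j(u) : 0 ≤ j < n} ∪ {α^j(β(u)) : 0 ≤ j < n}`,
where `β` is reversal. -/
noncomputable def dihedralOrbit {α : Type*} [DecidableEq α] (u : List α) : Finset (List α) :=
  ((Finset.range u.length).image fun j => cyc^[j] u) ∪
    ((Finset.range u.length).image fun j => cyc^[j] u.reverse)

/-- Lucas numbers: `L₀ = 2`, `L₁ = 1`, `Lₙ = Lₙ₋₁ + Lₙ₋₂`. -/
def lucas : ℕ → ℕ
  | 0 => 2
  | 1 => 1
  | n + 2 => lucas (n + 1) + lucas n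

/-- All binary strings of length `n`, as a finset of boolean lists. -/
def allBool (n : ℕ) : Finset (List Bool) :=
  (Finset.univ : Finset (Fin n → Bool)).image fun f => List.ofFn f

/-- A Fibonacci string: a binary string with no two consecutive 1s. -/
def IsFibStr (l : List Bool) : Prop := l.Chain' fun a b => a = false ∨ b = false

/-- The Fibonacci strings of length `n` (vertices of the Fibonacci cube `Γₙ`). -/
noncomputable def fibStrings (n : ℕ) : Finset (List Bool) := (allBool n).filter IsFibStr

/-- A Lucas string: a binary string with no two consecutive 1s which does not both
begin and end with 1. -/
def IsLucasStr (l : List Bool) : Prop :=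
  IsFibStr l ∧ ¬(l.head? = some true ∧ l.getLast? = some true)

/-- The Lucas strings of length `n` (vertices of the Lucas cube `Λₙ`). -/
noncomputable def lucasStrings (n : ℕ) : Finset (List Bool) := (allBool n).filter IsLucasStr

/-- Two strings differ in exactly one position. -/
def DifferOne (u v : List Bool) : Prop :=
  u.length = v.length ∧ (List.zipWith (fun a b => a != b) u v).count true = 1

/-- The edges of the Fibonacci cube `Γₙ`, as unordered pairs of vertices. -/
noncomputable def fibEdges (n : ℕ) : Finset (Finset (List Bool)) :=
  ((fibStrings n ×ˢ fibStrings n).filter fun p => DifferOne p.1 p.2).image fun p => {p.1, p.2}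

/-- The edges of the Lucas cube `Λₙ`, as unordered pairs of vertices. -/
noncomputable def lucasEdges (n : ℕ) : Finset (Finset (List Bool)) :=
  ((lucasStrings n ×ˢ lucasStrings n).filter fun p => DifferOne p.1 p.2).image fun p => {p.1, p.2}

/-- The orbit of a vertex under the reversal map `β`. -/
def revOrbit (u : List Bool) : Finset (List Bool) := {u, u.reverse}

/-- The orbit of an edge under the reversal map `β`, acting by `β({u,v}) = {β(u),β(v)}`. -/
def revEdgeOrbit (e : Finset (List Bool)) : Finset (Finset (List Bool)) :=
  {e, e.image List.reverse}

/-- The orbit of an edge under the dihedral action on strings of length `n`: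
`{α^j(e) : 0 ≤ j < n} ∪ {α^j(β(e)) : 0 ≤ j < n}`. -/
noncomputable def dihedralEdgeOrbit (n : ℕ) (e : Finset (List Bool)) :
    Finset (Finset (List Bool)) :=
  ((Finset.range n).image fun j => e.image fun u => cyc^[j] u) ∪
    ((Finset.range n).image fun j => e.image fun u => cyc^[j] u.reverse)

lemma mem_allBool {u : List Bool} {n : ℕ} : u ∈ allBool n ↔ u.length = n := by
  constructor
  · intro h
    simp only [allBool, Finset.mem_image] at h
    obtain ⟨f, -, rfl⟩ := h
    simp
  · intro h
    subst h
    simp only [allBool, Finset.mem_image]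
    exact ⟨fun i => u[(i : ℕ)], Finset.mem_univ _, List.ofFn_getElem⟩

lemma mem_fibStrings {u : List Bool} {n : ℕ} :
    u ∈ fibStrings n ↔ u.length = n ∧ IsFibStr u := by
  simp [fibStrings, Finset.mem_filter, mem_allBool]

lemma card_fibStrings (n : ℕ) : (fibStrings n).card = Nat.fib (n + 2) := by
  induction n using Nat.twoStepInduction with
  | zero =>
    have : fibStrings 0 = {[]} := by
      ext u
      simp [mem_fibStrings, List.length_eq_zero_iff, IsFibStr, List.Chain']
      aesop
    simp [this]
  | one =>
    have : fibStrings 1 = {[false], [true]} := by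
      ext u
      simp only [mem_fibStrings, List.length_eq_one_iff, Finset.mem_insert, Finset.mem_singleton]
      constructor
      · rintro ⟨⟨a, rfl⟩, -⟩; cases a <;> simp
      · rintro (rfl | rfl) <;> exact ⟨⟨_, rfl⟩, by simp [IsFibStr, List.Chain']⟩
    rw [this]; decide
  | more n ih2 ih1 =>
    have key : fibStrings (n + 2) =
        ((fibStrings (n + 1)).image (List.cons false)) ∪
        ((fibStrings n).image (fun w => true :: false :: w)) := by
      ext u
      simp only [Finset.mem_union, Finset.mem_image, mem_fibStrings]
      constructor
      · rintro ⟨hlen, hfib⟩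
        match u, hlen with
        | false :: t, hlen =>
          left
          refine ⟨t, ⟨by simpa using hlen, ?_⟩, rfl⟩
          exact (List.isChain_cons.1 hfib).2
        | true :: b :: s, hlen =>
          have h1 := List.isChain_cons_cons.1 hfib
          have hb : b = false := by
            rcases h1.1 with h | h
            · exact absurd h (by simp)
            · exact h
          subst hb
          right
          exact ⟨s, ⟨by simpa using hlen, (List.isChain_cons.1 h1.2).2⟩, rfl⟩
        | [true], hlen => simp at hlen
      · rintro (⟨t, ⟨hlen, hfib⟩, rfl⟩ | ⟨s, ⟨hlen, hfib⟩, rfl⟩)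
        · exact ⟨by simp [hlen], List.isChain_cons.2 ⟨fun b _ => Or.inl rfl, hfib⟩⟩
        · refine ⟨by simp [hlen], List.isChain_cons_cons.2 ⟨Or.inr rfl, ?_⟩⟩
          exact List.isChain_cons.2 ⟨fun b _ => Or.inl rfl, hfib⟩
    rw [key, Finset.card_union_of_disjoint, Finset.card_image_of_injective,
      Finset.card_image_of_injective, ih1, ih2]
    · rw [show n+1+2 = n+2+1 by omega]; have := Nat.fib_add_two (n := n + 2); omega
    · intro a b h; simpa using h
    · intro a b h; simpa using h
    · rw [Finset.disjoint_left]
      rintro u hu hu'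
      simp only [Finset.mem_image] at hu hu'
      obtain ⟨t, -, rfl⟩ := hu
      obtain ⟨s, -, h⟩ := hu'
      simp at h

lemma IsFibStr.rev {u : List Bool} (h : IsFibStr u) : IsFibStr u.reverse :=
  List.isChain_reverse.2 (h.imp fun _ _ hab => Or.symm hab)

lemma IsFibStr.take {u : List Bool} (h : IsFibStr u) (m : ℕ) : IsFibStr (u.take m) :=
  (List.isChain_append.1 (show IsFibStr (u.take m ++ u.drop m) by
    rwa [List.take_append_drop])).1

lemma isFibStr_append {l₁ l₂ : List Bool} (h₁ : IsFibStr l₁) (h₂ : IsFibStr l₂)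
    (h : ∀ x ∈ l₁.getLast?, ∀ y ∈ l₂.head?, x = false ∨ y = false) : IsFibStr (l₁ ++ l₂) :=
  List.isChain_append.2 ⟨h₁, h₂, h⟩

lemma IsFibStr.pair {u : List Bool} (h : IsFibStr u) {i : ℕ} (hi : i + 1 < u.length) :
    u[i] = false ∨ u[i+1] = false := by
  have := List.isChain_iff_getElem.1 h i (by omega)
  simpa using this

lemma pal_getElem {u : List Bool} (hrev : u.reverse = u) {i j : ℕ} (hi : i < u.length)
    (hj : j < u.length) (hij : i + j + 1 = u.length) : u[i] = u[j] := by
  have h2 : i < u.reverse.length := by simpa using hi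
  calc u[i] = u.reverse[i] := (List.getElem_of_eq hrev.symm hi)
    _ = u[u.length - 1 - i]'(by omega) := List.getElem_reverse h2
    _ = u[j] := by simp only [show u.length - 1 - i = j by omega]

lemma rev_take_pal {u : List Bool} (hrev : u.reverse = u) {a b : ℕ}
    (hab : a + b = u.length) : (u.take a).reverse = u.drop b := by
  rw [List.reverse_take, hrev, show u.length - a = b by omega]

lemma card_pal_even (m : ℕ) :
    (((fibStrings (2*(m+1))).filter fun u => u.reverse = u)).card = (fibStrings m).card := by
  refine Finset.card_bij' (fun u _ => u.take m)
    (fun v _ => (v ++ [false]) ++ (v ++ [false]).reverse) ?_ ?_ ?_ ?_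
  · intro u hu
    obtain ⟨hu, -⟩ := Finset.mem_filter.1 hu
    obtain ⟨hlen, hfib⟩ := mem_fibStrings.1 hu
    exact mem_fibStrings.2 ⟨by rw [List.length_take, hlen]; omega, hfib.take m⟩
  · intro v hv
    obtain ⟨hlen, hfib⟩ := mem_fibStrings.1 hv
    have hw : IsFibStr (v ++ [false]) := by
      refine isFibStr_append hfib (by simp [IsFibStr, List.Chain']) ?_
      intro x hx y hy
      simp only [List.head?_cons, Option.mem_def, Option.some.injEq] at hy
      exact Or.inr hy.symm
    refine Finset.mem_filter.2 ⟨mem_fibStrings.2 ⟨by simp [hlen]; omega, ?_⟩, ?_⟩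
    · refine isFibStr_append hw hw.rev ?_
      intro x hx y hy
      rw [List.getLast?_concat] at hx
      exact Or.inl (by simpa using hx.symm)
    · simp [List.reverse_append, List.append_assoc]
  · intro u hu
    obtain ⟨hu', hrev⟩ := Finset.mem_filter.1 hu
    obtain ⟨hlen, hfib⟩ := mem_fibStrings.1 hu'
    have hm : u[m]'(by omega) = false := by
      rcases hfib.pair (i := m) (by omega) with h | h
      · exact h
      · have h2 := pal_getElem hrev (i := m) (j := m+1) (by omega) (by omega) (by omega)
        rw [h2]; exact h
    have ht : u.take m ++ [false] = u.take (m+1) := by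
      rw [List.take_succ, List.getElem?_eq_getElem (by omega : m < u.length), hm]
      rfl
    show (u.take m ++ [false]) ++ (u.take m ++ [false]).reverse = u
    rw [ht, rev_take_pal hrev (a := m+1) (b := m+1) (by omega), List.take_append_drop]
  · intro v hv
    have hlen := (mem_fibStrings.1 hv).1
    show List.take m ((v ++ [false]) ++ (v ++ [false]).reverse) = v
    rw [List.append_assoc]
    exact List.take_left' hlen

lemma card_pal_odd (k : ℕ) :
    (((fibStrings (2*k+1)).filter fun u => u.reverse = u)).card = (fibStrings (k+1)).card := by
  refine Finset.card_bij' (fun u _ => u.take (k+1))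
    (fun v _ => v.take k ++ v.reverse) ?_ ?_ ?_ ?_
  · intro u hu
    obtain ⟨hu, -⟩ := Finset.mem_filter.1 hu
    obtain ⟨hlen, hfib⟩ := mem_fibStrings.1 hu
    exact mem_fibStrings.2 ⟨by rw [List.length_take, hlen]; omega, hfib.take _⟩
  · intro v hv
    obtain ⟨hlen, hfib⟩ := mem_fibStrings.1 hv
    show v.take k ++ v.reverse ∈ _
    rcases List.eq_nil_or_concat v with rfl | ⟨w, c, rfl⟩
    · simp at hlen
    rw [List.concat_eq_append] at hlen hfib ⊢
    have hwl : w.length = k := by simpa using hlen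
    have hdecomp : (w ++ [c]).take k ++ (w ++ [c]).reverse = w ++ (c :: w.reverse) := by
      rw [List.take_left' hwl]; simp
    rw [hdecomp]
    have hcb := (List.isChain_append.1 hfib).2.2
    have hwfib : IsFibStr w := (List.isChain_append.1 hfib).1
    refine Finset.mem_filter.2 ⟨mem_fibStrings.2 ⟨by simp; omega, ?_⟩, ?_⟩
    · refine isFibStr_append hwfib ?_ ?_
      · refine List.isChain_cons.2 ⟨?_, hwfib.rev⟩
        intro y hy
        rw [List.head?_reverse] at hy
        exact Or.symm (hcb y hy c (by simp))
      · intro x hx y hy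
        simp only [List.head?_cons, Option.mem_def, Option.some.injEq] at hy
        subst hy
        exact hcb x hx c (by simp)
    · simp [List.reverse_append, List.append_assoc]
  · intro u hu
    obtain ⟨hu', hrev⟩ := Finset.mem_filter.1 hu
    obtain ⟨hlen, hfib⟩ := mem_fibStrings.1 hu'
    show (u.take (k+1)).take k ++ (u.take (k+1)).reverse = u
    rw [List.take_take, min_eq_left (by omega),
      rev_take_pal hrev (a := k+1) (b := k) (by omega)]
    exact List.take_append_drop k u
  · intro v hv
    have hlen := (mem_fibStrings.1 hv).1
    show (v.take k ++ v.reverse).take (k+1) = v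
    rcases List.eq_nil_or_concat v with rfl | ⟨w, c, rfl⟩
    · simp at hlen
    rw [List.concat_eq_append] at hlen ⊢
    have hwl : w.length = k := by simpa using hlen
    rw [List.take_left' hwl]
    have hd : w ++ (w ++ [c]).reverse = (w ++ [c]) ++ w.reverse := by simp
    rw [hd]
    exact List.take_left' (by simp [hwl])

lemma reverse_mem_fibStrings {u : List Bool} {n : ℕ} (h : u ∈ fibStrings n) :
    u.reverse ∈ fibStrings n := by
  obtain ⟨hlen, hfib⟩ := mem_fibStrings.1 h
  exact mem_fibStrings.2 ⟨by simpa using hlen, hfib.rev⟩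

lemma mem_revOrbit {x u : List Bool} : x ∈ revOrbit u ↔ x = u ∨ x = u.reverse := by
  simp [revOrbit]

lemma revOrbit_eq_of_mem {x u : List Bool} (h : x ∈ revOrbit u) : revOrbit x = revOrbit u := by
  rcases mem_revOrbit.1 h with rfl | rfl
  · rfl
  · ext y; simp [revOrbit]; tauto

lemma revOrbit_card {u : List Bool} :
    (revOrbit u).card = if u.reverse = u then 1 else 2 := by
  rw [revOrbit]
  split
  · next h => rw [h]; simp
  · next h =>
    rw [Finset.card_insert_of_notMem (by simp; exact fun hh => h hh.symm)]
    simp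

lemma orbit_card_one_or_two {n : ℕ} {O : Finset (List Bool)}
    (h : O ∈ (fibStrings n).image revOrbit) : O.card = 1 ∨ O.card = 2 := by
  obtain ⟨u, -, rfl⟩ := Finset.mem_image.1 h
  rw [revOrbit_card]
  split <;> simp

lemma count_fixed {n : ℕ} :
    (((fibStrings n).image revOrbit).filter fun O => O.card = 1).card
      = ((fibStrings n).filter fun u => u.reverse = u).card := by
  refine (Finset.card_bij (fun u _ => revOrbit u) ?_ ?_ ?_).symm
  · intro u hu
    obtain ⟨hu, hrev⟩ := Finset.mem_filter.1 hu
    refine Finset.mem_filter.2 ⟨Finset.mem_image.2 ⟨u, hu, rfl⟩, ?_⟩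
    rw [revOrbit_card, if_pos hrev]
  · intro u hu v hv h
    obtain ⟨-, hru⟩ := Finset.mem_filter.1 hu
    obtain ⟨-, hrv⟩ := Finset.mem_filter.1 hv
    have h' : revOrbit u = revOrbit v := by simpa using h
    have : u ∈ revOrbit v := h' ▸ mem_revOrbit.2 (Or.inl rfl)
    rcases mem_revOrbit.1 this with rfl | rfl
    · rfl
    · exact hrv
  · intro O hO
    obtain ⟨hO', hcard⟩ := Finset.mem_filter.1 hO
    obtain ⟨u, hu, rfl⟩ := Finset.mem_image.1 hO'
    have hrev : u.reverse = u := by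
      by_contra h
      rw [revOrbit_card, if_neg h] at hcard
      omega
    exact ⟨u, Finset.mem_filter.2 ⟨hu, hrev⟩, rfl⟩

lemma fibStrings_eq_biUnion (n : ℕ) :
    fibStrings n = ((fibStrings n).image revOrbit).biUnion id := by
  ext x
  simp only [Finset.mem_biUnion, Finset.mem_image, id]
  constructor
  · intro hx
    exact ⟨revOrbit x, ⟨x, hx, rfl⟩, mem_revOrbit.2 (Or.inl rfl)⟩
  · rintro ⟨O, ⟨u, hu, rfl⟩, hx⟩
    rcases mem_revOrbit.1 hx with rfl | rfl
    · exact hu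
    · exact reverse_mem_fibStrings hu

lemma card_fib_eq_sum (n : ℕ) :
    (fibStrings n).card = ∑ O ∈ (fibStrings n).image revOrbit, O.card := by
  conv_lhs => rw [fibStrings_eq_biUnion n]
  have hdisj : ∀ O₁ ∈ (fibStrings n).image revOrbit, ∀ O₂ ∈ (fibStrings n).image revOrbit,
      O₁ ≠ O₂ → Disjoint (id O₁) (id O₂) := by
    intro O₁ h₁ O₂ h₂ hne
    obtain ⟨u, -, rfl⟩ := Finset.mem_image.1 h₁
    obtain ⟨v, -, rfl⟩ := Finset.mem_image.1 h₂
    simp only [id]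
    rw [Finset.disjoint_left]
    intro w hw hw'
    exact hne ((revOrbit_eq_of_mem hw).symm.trans (revOrbit_eq_of_mem hw'))
  rw [Finset.card_biUnion hdisj]
  rfl

lemma filter_ne_one (n : ℕ) :
    (((fibStrings n).image revOrbit).filter fun O => ¬ O.card = 1)
      = ((fibStrings n).image revOrbit).filter fun O => O.card = 2 := by
  apply Finset.filter_congr
  intro O hO
  rcases orbit_card_one_or_two hO with h | h <;> simp [h]

lemma card_fib_split (n : ℕ) :
    (fibStrings n).card
      = (((fibStrings n).image revOrbit).filter fun O => O.card = 1).card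
        + 2 * (((fibStrings n).image revOrbit).filter fun O => O.card = 2).card := by
  rw [card_fib_eq_sum n, ← Finset.sum_filter_add_sum_filter_not _ (fun O => O.card = 1)]
  have h1 : ∀ O ∈ ((fibStrings n).image revOrbit).filter (fun O => O.card = 1),
      O.card = 1 := fun O hO => (Finset.mem_filter.1 hO).2
  rw [Finset.sum_congr rfl h1, filter_ne_one n, Finset.sum_congr rfl
    (fun O hO => (Finset.mem_filter.1 hO).2)]
  simp [Finset.sum_const, mul_comm]

lemma card_orbits_split (n : ℕ) :
    ((fibStrings n).image revOrbit).card
      = (((fibStrings n).image revOrbit).filter fun O => O.card = 1).card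
        + (((fibStrings n).image revOrbit).filter fun O => O.card = 2).card := by
  rw [← Finset.card_filter_add_card_filter_not
    (s := (fibStrings n).image revOrbit) (p := fun O => O.card = 1)]
  rw [filter_ne_one n]

/-- Vertex orbits of the Fibonacci cube `Γₙ` under the reversal map, for `n ≥ 2`:
there are `F_{⌊(n−(−1)ⁿ)/2⌋+2}` orbits of size 1, `(F_{n+2} − F_{⌊(n−(−1)ⁿ)/2⌋+2})/2`
orbits of size 2, and `(F_{n+2} + F_{⌊(n−(−1)ⁿ)/2⌋+2})/2` orbits in total. -/
theorem fib_vertex_orbits (n : ℕ) (hn : 2 ≤ n) :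
    ((((fibStrings n).image revOrbit).filter fun O => O.card = 1).card
        = Nat.fib ((((n : ℤ) - (-1 : ℤ) ^ n) / 2).toNat + 2)) ∧
    (((((fibStrings n).image revOrbit).filter fun O => O.card = 2).card : ℚ)
        = ((Nat.fib (n + 2) : ℚ)
            - (Nat.fib ((((n : ℤ) - (-1 : ℤ) ^ n) / 2).toNat + 2) : ℚ)) / 2) ∧
    ((((fibStrings n).image revOrbit).card : ℚ)
        = ((Nat.fib (n + 2) : ℚ)
            + (Nat.fib ((((n : ℤ) - (-1 : ℤ) ^ n) / 2).toNat + 2) : ℚ)) / 2) := by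
  set m' := (((n : ℤ) - (-1 : ℤ) ^ n) / 2).toNat with hm'
  have hp : ((fibStrings n).filter fun u => u.reverse = u).card = Nat.fib (m' + 2) := by
    rcases Nat.even_or_odd n with he | ho
    · have hneg : ((-1 : ℤ)) ^ n = 1 := he.neg_one_pow
      obtain ⟨k, hk⟩ := he
      have hmval : m' = k - 1 := by rw [hm', hneg]; omega
      obtain ⟨m, rfl⟩ : ∃ m, k = m + 1 := ⟨k - 1, by omega⟩
      have h1 : n = 2 * (m + 1) := by omega
      rw [h1, card_pal_even m, card_fibStrings m, hmval]
      simp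
    · have hneg : ((-1 : ℤ)) ^ n = -1 := ho.neg_one_pow
      obtain ⟨k, hk⟩ := ho
      have hmval : m' = k + 1 := by rw [hm', hneg]; omega
      rw [hk, card_pal_odd k, card_fibStrings (k + 1), hmval]
  have ha : (((fibStrings n).image revOrbit).filter fun O => O.card = 1).card
      = Nat.fib (m' + 2) := count_fixed.trans hp
  have hsplit := card_fib_split n
  rw [card_fibStrings n, ha] at hsplit
  have htot := card_orbits_split n
  rw [ha] at htot
  refine ⟨ha, ?_, ?_⟩
  · have := congrArg (Nat.cast : ℕ → ℚ) hsplit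
    push_cast at this
    rw [eq_div_iff (two_ne_zero)]
    linarith
  · have h1 := congrArg (Nat.cast : ℕ → ℚ) hsplit
    have h2 := congrArg (Nat.cast : ℕ → ℚ) htot
    push_cast at h1 h2
    rw [eq_div_iff (two_ne_zero)]
    linarith
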